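/- If C : 2^M → ℝ≥0 is a monotone XOS cost function, then for every allocation S, the potential function satisfies P_C(S) ≥ C(S). -/

import Mathlib

open Finset

variable {α : Type*}

noncomputable def potential [DecidableEq α] (n : ℕ)
    (C : Finset α → ℝ) (S : Fin n → Finset α) : ℝ :=
  ∑ I ∈ (univ : Finset (Fin n)).powerset.filter (· ≠ ∅),
    C (I.biUnion S) / ((I.card : ℝ) * (n.choose I.card : ℝ))

lemma key_sum (n : ℕ) (i : Fin n) :
    ∑ I ∈ ((univ : Finset (Fin n)).powerset.filter (· ≠ ∅)).filter (fun I => i ∈ I),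
      1 / ((I.card : ℝ) * (n.choose I.card : ℝ)) = 1 := by
  have hn : 0 < n := i.pos
  have hfil : ((univ : Finset (Fin n)).powerset.filter (· ≠ ∅)).filter (fun I => i ∈ I)
      = (univ : Finset (Fin n)).powerset.filter (fun I => i ∈ I) := by
    ext I
    simp only [mem_filter, mem_powerset, subset_univ, true_and]
    exact ⟨fun h => h.2, fun h => ⟨ne_empty_of_mem h, h⟩⟩
  rw [hfil]
  have hbij : ∑ I ∈ (univ : Finset (Fin n)).powerset.filter (fun I => i ∈ I),
      1 / ((I.card : ℝ) * (n.choose I.card : ℝ))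
      = ∑ J ∈ ((univ : Finset (Fin n)).erase i).powerset,
      1 / (((J.card : ℝ) + 1) * (n.choose (J.card + 1) : ℝ)) := by
    apply Finset.sum_nbij' (fun I => I.erase i) (fun J => insert i J)
    · intro I hI
      simp only [mem_filter, mem_powerset] at hI
      simp only [mem_powerset]
      exact erase_subset_erase _ hI.1
    · intro J hJ
      simp only [mem_powerset] at hJ
      simp only [mem_filter, mem_powerset, subset_univ, true_and, mem_insert, true_or]
    · intro I hI
      simp only [mem_filter] at hI
      exact insert_erase hI.2
    · intro J hJ
      simp only [mem_powerset] at hJ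
      exact erase_insert (fun h => (mem_erase.1 (hJ h)).1 rfl)
    · intro I hI
      simp only [mem_filter] at hI
      rw [card_erase_of_mem hI.2]
      have h1 : 1 ≤ I.card := card_pos.2 ⟨i, hI.2⟩
      rw [Nat.sub_add_cancel h1]
      congr 2
      push_cast [Nat.cast_sub h1]
      ring
  rw [hbij]
  have hkey : ∀ k : ℕ, ((k : ℝ) + 1) * (n.choose (k + 1) : ℝ) = (n : ℝ) * ((n-1).choose k : ℝ) := by
    intro k
    have := Nat.add_one_mul_choose_eq (n-1) k
    rw [Nat.sub_add_cancel hn] at this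
    have : ((n * (n-1).choose k : ℕ) : ℝ) = ((n.choose (k+1) * (k+1) : ℕ) : ℝ) := by rw [this]
    push_cast at this
    linarith
  have hcard : ((univ : Finset (Fin n)).erase i).card = n - 1 := by
    rw [card_erase_of_mem (mem_univ i), card_univ, Fintype.card_fin]
  calc ∑ J ∈ ((univ : Finset (Fin n)).erase i).powerset,
      1 / (((J.card : ℝ) + 1) * (n.choose (J.card + 1) : ℝ))
      = ∑ J ∈ ((univ : Finset (Fin n)).erase i).powerset,
        1 / ((n : ℝ) * ((n-1).choose J.card : ℝ)) := by
        refine Finset.sum_congr rfl fun J _ => ?_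
        rw [hkey]
    _ = ∑ m ∈ range ((n-1) + 1), ((n-1).choose m) • (1 / ((n : ℝ) * ((n-1).choose m : ℝ))) := by
        rw [Finset.sum_powerset_apply_card (fun m => 1 / ((n : ℝ) * ((n-1).choose m : ℝ)))]
        rw [hcard]
    _ = ∑ m ∈ range ((n-1) + 1), 1 / (n : ℝ) := by
        refine Finset.sum_congr rfl fun m hm => ?_
        rw [mem_range] at hm
        have hpos : 0 < (n-1).choose m := Nat.choose_pos (by omega)
        have h1 : ((n-1).choose m : ℝ) ≠ 0 := Nat.cast_ne_zero.2 hpos.ne'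
        have h2 : (n : ℝ) ≠ 0 := Nat.cast_ne_zero.2 hn.ne'
        rw [nsmul_eq_mul]
        field_simp
    _ = 1 := by
        rw [Finset.sum_const, card_range]
        have : (n - 1 + 1) = n := Nat.sub_add_cancel hn
        rw [this]
        rw [nsmul_eq_mul]
        field_simp [Nat.cast_ne_zero.2 hn.ne']


theorem stmt5 [DecidableEq α] (n : ℕ) (M : Fin n → Finset α)
    (hM : ∀ i j : Fin n, i ≠ j → Disjoint (M i) (M j))
    (C : Finset α → ℝ)
    (hmono : ∀ S T : Finset α, S ⊆ T → C S ≤ C T)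
    (t : ℕ) (ht : 0 < t) (a : Fin t → α → ℝ) (ha : ∀ r x, 0 ≤ a r x)
    (hxos : ∀ S : Finset α, C S =
      (univ : Finset (Fin t)).sup' ⟨⟨0, ht⟩, mem_univ _⟩ (fun r => ∑ x ∈ S, a r x))
    (S : Fin n → Finset α) (hS : ∀ i, S i ⊆ M i) :
    C (univ.biUnion S) ≤ potential n C S := by
  obtain ⟨r, -, hr⟩ := Finset.exists_mem_eq_sup' (⟨⟨0, ht⟩, mem_univ _⟩ :
    (univ : Finset (Fin t)).Nonempty) (fun r => ∑ x ∈ univ.biUnion S, a r x)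
  set w : Fin n → ℝ := fun i => ∑ x ∈ S i, a r x with hw
  have hsplit : ∀ I : Finset (Fin n), ∑ x ∈ I.biUnion S, a r x = ∑ i ∈ I, w i := by
    intro I
    exact Finset.sum_biUnion fun i _ j _ hij =>
      Finset.disjoint_of_subset_left (hS i) (Finset.disjoint_of_subset_right (hS j) (hM i j hij))
  have hC : C (univ.biUnion S) = ∑ i, w i := by
    rw [hxos, hr, hsplit]
  set A := (univ : Finset (Fin n)).powerset.filter (· ≠ ∅) with hA
  have hstep : ∑ I ∈ A, (∑ i ∈ I, w i) / ((I.card : ℝ) * (n.choose I.card : ℝ))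
      ≤ potential n C S := by
    refine Finset.sum_le_sum fun I hI => ?_
    simp only [hA, mem_filter, mem_powerset] at hI
    have hne : I.Nonempty := nonempty_iff_ne_empty.2 hI.2
    have hdpos : 0 < (I.card : ℝ) * (n.choose I.card : ℝ) := by
      have h1 : 0 < I.card := card_pos.2 hne
      have h2 : 0 < n.choose I.card :=
        Nat.choose_pos (by simpa using card_le_card hI.1)
      positivity
    have hCI : ∑ i ∈ I, w i ≤ C (I.biUnion S) := by
      rw [hxos, ← hsplit]
      exact Finset.le_sup' (fun r => ∑ x ∈ I.biUnion S, a r x) (mem_univ r)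
    exact div_le_div_of_nonneg_right hCI hdpos.le

  refine le_trans ?_ hstep
  have : ∑ I ∈ A, (∑ i ∈ I, w i) / ((I.card : ℝ) * (n.choose I.card : ℝ))
      = ∑ i, w i * ∑ I ∈ A.filter (fun I => i ∈ I),
        1 / ((I.card : ℝ) * (n.choose I.card : ℝ)) := by
    have h1 : ∀ I ∈ A, (∑ i ∈ I, w i) / ((I.card : ℝ) * (n.choose I.card : ℝ))
        = ∑ i ∈ (univ : Finset (Fin n)), if i ∈ I then
          w i * (1 / ((I.card : ℝ) * (n.choose I.card : ℝ))) else 0 := by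
      intro I _
      rw [Finset.sum_ite_mem, univ_inter, Finset.sum_div]
      exact Finset.sum_congr rfl fun i _ => by ring
    rw [Finset.sum_congr rfl h1, Finset.sum_comm]
    refine Finset.sum_congr rfl fun i _ => ?_
    rw [Finset.mul_sum, ← Finset.sum_filter]
  rw [this, hC]
  refine Finset.sum_le_sum fun i _ => ?_
  rw [key_sum n i, mul_one]
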